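/- Let K ⊂ R^d be a convex body in γ-canonical form for a constant γ, and let 0 < α < 1. Then there exist constants c, c' > 0 depending only on d and γ such that every cap C of K of width α satisfies c·α^d ≤ vol(C) ≤ c'·α. -/

import Mathlib

set_option maxHeartbeats 1000000


open MeasureTheory Metric Set
open scoped RealInnerProductSpace

/-- There exist constants `c, c' > 0` depending only on `d` and `γ`
such that for every convex body `K ⊆ ℝ^d` in `γ`-canonical form and every `α`
with `0 < α < 1`, every cap of `K` of width `α` has volume between `c·α^d` and
`c'·α`. -/
theorem stmt3 (d : ℕ) (γ : ℝ) (hγ0 : 0 < γ) (hγ1 : γ ≤ 1) :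
    ∃ c > (0 : ℝ), ∃ c' > (0 : ℝ),
      ∀ (K : Set (EuclideanSpace ℝ (Fin d))),
        Convex ℝ K → IsCompact K → (interior K).Nonempty →
        closedBall (0 : EuclideanSpace ℝ (Fin d)) (Real.sqrt γ) ⊆ K →
        K ⊆ closedBall (0 : EuclideanSpace ℝ (Fin d)) (1 / Real.sqrt γ) →
        ∀ (α : ℝ), 0 < α → α < 1 →
        ∀ (u : EuclideanSpace ℝ (Fin d)), ‖u‖ = 1 →
        ∀ (m : ℝ), m = sSup ((fun y => ⟪u, y⟫) '' K) →
          c * α ^ d ≤ (volume {y ∈ K | m - α ≤ ⟪u, y⟫}).toReal ∧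
            (volume {y ∈ K | m - α ≤ ⟪u, y⟫}).toReal ≤ c' * α := by
  have hsγ : 0 < Real.sqrt γ := Real.sqrt_pos.2 hγ0
  set sγ : ℝ := Real.sqrt γ with hsγdef
  have hsγ1 : sγ ≤ 1 := by
    rw [hsγdef, show (1:ℝ) = Real.sqrt 1 from Real.sqrt_one.symm]
    exact Real.sqrt_le_sqrt hγ1
  have hγsq : sγ * sγ = γ := Real.mul_self_sqrt hγ0.le
  set ωd : ℝ := (volume (closedBall (0 : EuclideanSpace ℝ (Fin d)) 1)).toReal with hωd
  have hωdpos : 0 < ωd :=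
    ENNReal.toReal_pos (measure_closedBall_pos volume _ one_pos).ne' measure_closedBall_lt_top.ne
  refine ⟨(γ/2)^d * ωd, by positivity, (2/sγ)^(d-1), by positivity, ?_⟩
  intro K hconv hcomp hint hball1 hball2 α hα0 hα1 u hu m hm
  rcases Nat.eq_zero_or_pos d with hd0 | hd
  · exfalso
    subst hd0
    have h0 : u = 0 := by ext i; exact i.elim0
    rw [h0, norm_zero] at hu
    norm_num at hu
  obtain ⟨n, rfl⟩ : ∃ n, d = n + 1 := ⟨d - 1, (Nat.succ_pred_eq_of_pos hd).symm⟩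
  have hK0 : (0 : EuclideanSpace ℝ (Fin (n+1))) ∈ K :=
    hball1 (mem_closedBall_self hsγ.le)
  have hcont : Continuous fun y : EuclideanSpace ℝ (Fin (n+1)) => ⟪u, y⟫ :=
    continuous_const.inner continuous_id
  obtain ⟨x₀, hx₀K, hx₀max⟩ := hcomp.exists_isMaxOn ⟨0, hK0⟩ hcont.continuousOn
  have hmax : ∀ y ∈ K, ⟪u, y⟫ ≤ ⟪u, x₀⟫ := fun y hy => hx₀max hy
  have hmeq : m = ⟪u, x₀⟫ := by
    rw [hm]
    refine IsGreatest.csSup_eq ⟨⟨x₀, hx₀K, rfl⟩, ?_⟩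
    rintro r ⟨y, hy, rfl⟩
    exact hmax y hy
  have hx₀n : ‖x₀‖ ≤ 1/sγ := mem_closedBall_zero_iff.1 (hball2 hx₀K)
  have hmub : m ≤ 1/sγ := by
    rw [hmeq]
    calc ⟪u, x₀⟫ ≤ ‖u‖ * ‖x₀‖ := real_inner_le_norm u x₀
    _ ≤ 1/sγ := by rw [hu, one_mul]; exact hx₀n
  set t₀ : ℝ := α * sγ / 2 with ht₀def
  have ht₀ : 0 < t₀ := by positivity
  have ht₀1 : t₀ ≤ 1 := by nlinarith
  set cap : Set (EuclideanSpace ℝ (Fin (n+1))) := {y ∈ K | m - α ≤ ⟪u, y⟫} with hcapdef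
  have hcapsub : cap ⊆ closedBall 0 (1/sγ) := fun y hy => hball2 hy.1
  have hcapfin : volume cap ≠ ⊤ :=
    ((measure_mono hcapsub).trans_lt measure_closedBall_lt_top).ne
  constructor
  · -- lower bound
    have hsub : closedBall ((1 - t₀) • x₀) (t₀ * sγ) ⊆ cap := by
      intro y hy
      rw [mem_closedBall, dist_eq_norm] at hy
      set z : EuclideanSpace ℝ (Fin (n+1)) := t₀⁻¹ • (y - (1 - t₀) • x₀) with hzdef
      have hzn : ‖z‖ ≤ sγ := by
        rw [hzdef, norm_smul, norm_inv, Real.norm_of_nonneg ht₀.le]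
        rw [inv_mul_le_iff₀ ht₀]
        linarith [hy]
      have hzK : z ∈ K := hball1 (mem_closedBall_zero_iff.2 hzn)
      have hyeq : y = (1 - t₀) • x₀ + t₀ • z := by
        rw [hzdef, smul_inv_smul₀ ht₀.ne']
        abel
      have hyK : y ∈ K := by
        rw [hyeq]
        exact hconv hx₀K hzK (by linarith) ht₀.le (by ring)
      have hin : ⟪u, y⟫ = (1 - t₀) * ⟪u, x₀⟫ + t₀ * ⟪u, z⟫ := by
        rw [hyeq, inner_add_right, real_inner_smul_right, real_inner_smul_right]
      have hz2 : -sγ ≤ ⟪u, z⟫ := by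
        have h := abs_real_inner_le_norm u z
        rw [hu, one_mul] at h
        have := abs_le.1 (h.trans hzn)
        linarith [this.1]
      refine ⟨hyK, ?_⟩
      have h1 : t₀ * m ≤ t₀ * (1/sγ) := mul_le_mul_of_nonneg_left hmub ht₀.le
      have h2 : t₀ * (1/sγ) = α/2 := by
        rw [ht₀def]; field_simp
      have h3 : t₀ * sγ ≤ α/2 := by nlinarith
      have h4 : -(t₀ * sγ) ≤ t₀ * ⟪u, z⟫ := by nlinarith
      rw [hin, ← hmeq]
      nlinarith
    have hr0 : (0:ℝ) ≤ t₀ * sγ := by positivity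
    have hvb : volume (closedBall ((1 - t₀) • x₀) (t₀ * sγ)) =
        ENNReal.ofReal ((t₀ * sγ)^(n+1)) *
          volume (closedBall (0 : EuclideanSpace ℝ (Fin (n+1))) 1) := by
      rw [Measure.addHaar_closedBall' _ _ hr0, finrank_euclideanSpace_fin]
    have hmono := ENNReal.toReal_mono hcapfin (measure_mono hsub)
    rw [hvb, ENNReal.toReal_mul, ENNReal.toReal_ofReal (by positivity)] at hmono
    have key : t₀ * sγ = γ/2 * α := by
      rw [ht₀def]
      linear_combination (α/2) * hγsq
    calc (γ/2)^(n+1) * ωd * α^(n+1) = (t₀ * sγ)^(n+1) * ωd := by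
          rw [key, mul_pow]; ring
    _ ≤ (volume cap).toReal := hmono
  · -- upper bound
    have hcard : Module.finrank ℝ (EuclideanSpace ℝ (Fin (n+1))) = Fintype.card (Fin (n+1)) := by
      simp [finrank_euclideanSpace_fin]
    have hon : Orthonormal ℝ (({0} : Set (Fin (n+1))).restrict (fun _ => u)) := by
      refine ⟨fun i => hu, fun i j hij => absurd (Subsingleton.elim i j) hij⟩
    obtain ⟨b, hb⟩ := hon.exists_orthonormalBasis_extension_of_card_eq hcard
    have hb0 : b 0 = u := hb 0 rfl
    set R : ℝ := 1/sγ with hRdef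
    have hR0 : 0 < R := by positivity
    set I : Fin (n+1) → Set ℝ := fun i => if i = 0 then Icc (m - α) m else Icc (-R) R with hIdef
    have hIm : ∀ i, MeasurableSet (I i) := by
      intro i; rw [hIdef]; dsimp only; split_ifs <;> exact measurableSet_Icc
    set box : Set (Fin (n+1) → ℝ) := Set.pi univ I with hboxdef
    have hboxm : MeasurableSet box := MeasurableSet.univ_pi hIm
    have hsub2 : cap ⊆ b.repr ⁻¹' ((MeasurableEquiv.toLp 2 (Fin (n+1) → ℝ)).symm ⁻¹' box) := by
      intro y hy
      have hyn : ‖y‖ ≤ R := mem_closedBall_zero_iff.1 (hball2 hy.1)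
      simp only [mem_preimage, hboxdef, Set.mem_univ_pi]
      intro i
      have hco : (MeasurableEquiv.toLp 2 (Fin (n+1) → ℝ)).symm (b.repr y) i = ⟪b i, y⟫ := by
        rw [← b.repr_apply_apply]
        rfl
      rw [hco, hIdef]
      dsimp only
      split_ifs with h0
      · subst h0
        rw [hb0]
        exact ⟨hy.2, hmeq ▸ hmax y hy.1⟩
      · have h := abs_real_inner_le_norm (b i) y
        rw [b.orthonormal.1 i, one_mul] at h
        exact abs_le.1 (h.trans hyn)
    have hv1 : volume (b.repr ⁻¹' ((MeasurableEquiv.toLp 2 (Fin (n+1) → ℝ)).symm ⁻¹' box)) =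
        volume box := by
      rw [b.measurePreserving_repr.measure_preimage
        (((MeasurableEquiv.toLp 2 (Fin (n+1) → ℝ)).symm.measurable hboxm).nullMeasurableSet),
        (EuclideanSpace.volume_preserving_symm_measurableEquiv_toLp (Fin (n+1))).measure_preimage
          hboxm.nullMeasurableSet]
    have hv2 : volume box = ENNReal.ofReal α * (ENNReal.ofReal (2*R))^n := by
      rw [hboxdef, volume_pi_pi, Fin.prod_univ_succ]
      have h0 : volume (I 0) = ENNReal.ofReal α := by
        rw [hIdef]; simp [Real.volume_Icc]
      have hs : ∀ i : Fin n, volume (I i.succ) = ENNReal.ofReal (2*R) := by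
        intro i
        rw [hIdef]
        simp only [Fin.succ_ne_zero, if_false]
        rw [Real.volume_Icc]
        ring_nf
      rw [h0]
      congr 1
      rw [Finset.prod_congr rfl fun i _ => hs i, Finset.prod_const, Finset.card_univ,
        Fintype.card_fin]
    have hbound := ENNReal.toReal_mono (by
        rw [hv1, hv2]
        exact ENNReal.mul_ne_top ENNReal.ofReal_ne_top
          (ENNReal.pow_ne_top ENNReal.ofReal_ne_top))
      (measure_mono hsub2)
    rw [hv1, hv2, ENNReal.toReal_mul, ENNReal.toReal_pow,
      ENNReal.toReal_ofReal hα0.le, ENNReal.toReal_ofReal (by positivity)] at hbound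
    calc (volume cap).toReal ≤ α * (2*R)^n := hbound
    _ = (2/sγ)^(n+1-1) * α := by
        rw [hRdef]
        norm_num
        ring
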